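/- Let T ∈ (0, ∞], let ξ : [0, T) → ℂ be twice differentiable with |ξ(t)| < 1 for all t, satisfying ξ''(t) = (conj(ξ(t))/(1 − |ξ(t)|²) + 3·conj(ξ(t))/(1 + |ξ(t)|²))·(ξ'(t))², and let I₁ = ((1 − |ξ(0)|²)/(1 + |ξ(0)|²)³)·|ξ'(0)|² > 0. If |ξ(t)| → 1 as t → T, then |ξ'(t)| → ∞ as t → T. -/

import Mathlib

open Complex Filter Set Topology

private lemma sqrt_tendsto_atTop' : Filter.Tendsto Real.sqrt Filter.atTop Filter.atTop :=
  Filter.tendsto_atTop_atTop_of_monotone (fun _ _ h => Real.sqrt_le_sqrt h)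
    (fun b => ⟨b ^ 2, by rw [Real.sqrt_sq_eq_abs]; exact le_abs_self b⟩)

private lemma key_alg (A B C : ℂ) (u : ℝ) (hu : u = Complex.normSq A)
    (h1 : u < 1) (h0 : 0 ≤ u)
    (hC : C = ((starRingEnd ℂ) A / (1 - ((‖A‖ : ℝ) : ℂ) ^ 2) +
        3 * (starRingEnd ℂ) A / (1 + ((‖A‖ : ℝ) : ℂ) ^ 2)) * B ^ 2) :
    B.re * C.re + B.im * C.im
      = (1/(1 - u) + 3/(1 + u)) * (A.re * B.re + A.im * B.im) * Complex.normSq B := by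
  have h1c : (1:ℂ) - (u : ℂ) ≠ 0 := by
    have : ((1 - u : ℝ) : ℂ) ≠ 0 := by exact_mod_cast (sub_pos.2 h1).ne'
    simpa using this
  have h2c : (1:ℂ) + (u : ℂ) ≠ 0 := by
    have h : (1 + u : ℝ) ≠ 0 := by positivity
    have : ((1 + u : ℝ) : ℂ) ≠ 0 := by exact_mod_cast h
    simpa using this
  have hcast : ((‖A‖ : ℝ) : ℂ) ^ 2 = (u : ℂ) := by
    rw [← Complex.ofReal_pow, Complex.sq_norm, hu]
  have hBB : (starRingEnd ℂ) B * B ^ 2 = ((Complex.normSq B : ℝ) : ℂ) * B := by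
    rw [sq, ← mul_assoc, mul_comm ((starRingEnd ℂ) B) B, Complex.mul_conj]
  have hmain : (starRingEnd ℂ) B * C
      = (((1/(1 - u) + 3/(1 + u)) * Complex.normSq B : ℝ) : ℂ) * ((starRingEnd ℂ) A * B) := by
    rw [hC, hcast]
    have e1 : (starRingEnd ℂ) B * (((starRingEnd ℂ) A / (1 - (u:ℂ)) +
        3 * (starRingEnd ℂ) A / (1 + (u:ℂ))) * B ^ 2)
        = ((starRingEnd ℂ) A / (1 - (u:ℂ)) + 3 * (starRingEnd ℂ) A / (1 + (u:ℂ))) *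
          ((starRingEnd ℂ) B * B ^ 2) := by ring
    rw [e1, hBB]
    push_cast
    field_simp
  have hre : B.re * C.re + B.im * C.im = ((starRingEnd ℂ) B * C).re := by
    simp [Complex.mul_re]
  rw [hre, hmain, Complex.re_ofReal_mul]
  have : ((starRingEnd ℂ) A * B).re = A.re * B.re + A.im * B.im := by
    simp [Complex.mul_re]
  rw [this]; ring

private lemma normSq_deriv (ξ ξ' : ℝ → ℂ) (D : Set ℝ) (t : ℝ)
    (hξ : HasDerivWithinAt ξ (ξ' t) D t) :
    HasDerivWithinAt (fun s => Complex.normSq (ξ s))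
      (2 * ((ξ t).re * (ξ' t).re + (ξ t).im * (ξ' t).im)) D t := by
  have hre : HasDerivWithinAt (fun s => (ξ s).re) ((ξ' t).re) D t :=
    (Complex.reCLM.hasFDerivAt (x := ξ t)).comp_hasDerivWithinAt t hξ
  have him : HasDerivWithinAt (fun s => (ξ s).im) ((ξ' t).im) D t :=
    (Complex.imCLM.hasFDerivAt (x := ξ t)).comp_hasDerivWithinAt t hξ
  have h := (hre.mul hre).add (him.mul him)
  simp only [Complex.normSq_apply]
  exact h.congr_deriv (by ring)

/-- Blow-up of the geodesic flow at the lagrangian circle: for a geodesic `ξ` of the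
twisting holomorphic sphere defined on `[0, T)` (`T ∈ (0,∞]`), staying in `|ξ| < 1`,
with positive energy `I₁`, if `|ξ(t)| → 1` as `t → T` then `|ξ'(t)| → ∞` as `t → T`. -/
theorem geodesic_blow_up (T : EReal) (hT : 0 < T) (ξ ξ' ξ'' : ℝ → ℂ)
    (D : Set ℝ) (hD : D = {t : ℝ | 0 ≤ t ∧ (t : EReal) < T})
    (hξ : ∀ t ∈ D, HasDerivWithinAt ξ (ξ' t) D t)
    (hξ' : ∀ t ∈ D, HasDerivWithinAt ξ' (ξ'' t) D t)
    (hlt : ∀ t ∈ D, ‖ξ t‖ < 1)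
    (hgeo : ∀ t ∈ D, ξ'' t =
      ((starRingEnd ℂ) (ξ t) / (1 - ((‖ξ t‖ : ℝ) : ℂ) ^ 2) +
        3 * (starRingEnd ℂ) (ξ t) / (1 + ((‖ξ t‖ : ℝ) : ℂ) ^ 2)) * (ξ' t) ^ 2)
    (hI₁ : 0 < (1 - ‖ξ 0‖ ^ 2) / (1 + ‖ξ 0‖ ^ 2) ^ 3 *
      ‖ξ' 0‖ ^ 2)
    (hlim : Filter.Tendsto (fun t : ℝ => ‖ξ t‖)
      (Filter.comap (fun t : ℝ => (t : EReal)) (nhdsWithin T (Set.Iio T))) (nhds 1)) :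
    Filter.Tendsto (fun t : ℝ => ‖ξ' t‖)
      (Filter.comap (fun t : ℝ => (t : EReal)) (nhdsWithin T (Set.Iio T))) Filter.atTop := by
  set L := Filter.comap (fun t : ℝ => (t : EReal)) (nhdsWithin T (Set.Iio T)) with hL
  -- basic facts
  have h0D : (0:ℝ) ∈ D := by
    rw [hD]; exact ⟨le_refl 0, by exact_mod_cast hT⟩
  have hconv : Convex ℝ D := by
    rw [convex_iff_ordConnected, hD]
    constructor
    intro x hx y hy z hz
    exact ⟨hx.1.trans hz.1,
      lt_of_le_of_lt (by exact_mod_cast hz.2 : (z : EReal) ≤ (y : EReal)) hy.2⟩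
  have hu1 : ∀ t ∈ D, Complex.normSq (ξ t) < 1 := by
    intro t ht
    have h := hlt t ht
    have h0 := norm_nonneg (ξ t)
    have : ‖ξ t‖ ^ 2 < 1 := by nlinarith
    rwa [Complex.sq_norm] at this
  have hu0 : ∀ t : ℝ, 0 ≤ Complex.normSq (ξ t) := fun t => Complex.normSq_nonneg _
  -- the energy function
  set E : ℝ → ℝ := fun s =>
    (1 - Complex.normSq (ξ s)) / (1 + Complex.normSq (ξ s)) ^ 3 * Complex.normSq (ξ' s)
    with hE_def
  -- E has zero derivative on D
  have hE : ∀ t ∈ D, HasDerivWithinAt E 0 D t := by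
    intro t ht
    have hu' := normSq_deriv ξ ξ' D t (hξ t ht)
    have hv' := normSq_deriv ξ' ξ'' D t (hξ' t ht)
    have hkey := key_alg (ξ t) (ξ' t) (ξ'' t) (Complex.normSq (ξ t)) rfl
      (hu1 t ht) (hu0 t) (hgeo t ht)
    rw [hkey] at hv'
    have hu1' := hu1 t ht
    have hu0' := hu0 t
    have hne1 : (1 : ℝ) - Complex.normSq (ξ t) ≠ 0 := (sub_pos.2 hu1').ne'
    have hne2 : (1 : ℝ) + Complex.normSq (ξ t) ≠ 0 := by positivity
    have hne3 : ((1 : ℝ) + Complex.normSq (ξ t)) ^ 3 ≠ 0 := by positivity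
    have hnum : HasDerivWithinAt (fun s => 1 - Complex.normSq (ξ s))
        (-(2 * ((ξ t).re * (ξ' t).re + (ξ t).im * (ξ' t).im))) D t := hu'.const_sub 1
    have hden : HasDerivWithinAt (fun s => (1 + Complex.normSq (ξ s)) ^ 3)
        ((3:ℕ) * (1 + Complex.normSq (ξ t)) ^ 2 *
          (2 * ((ξ t).re * (ξ' t).re + (ξ t).im * (ξ' t).im))) D t := by
      have h := (hu'.const_add 1).pow 3
      exact h.congr_deriv (by norm_num)
    have hquot := hnum.div hden (by simpa using hne3)
    have hfull := hquot.mul hv'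
    refine hfull.congr_deriv ?_
    simp only [Pi.div_apply]
    field_simp
    ring
  -- E is constant on D
  have hconst : ∀ t ∈ D, E t = E 0 := by
    intro t ht
    have hF : ∀ x ∈ D, HasFDerivWithinAt E
        ((1 : ℝ →L[ℝ] ℝ).smulRight (0:ℝ)) D x :=
      fun x hx => (hE x hx).hasFDerivWithinAt
    have hb : ∀ x ∈ D, ‖(1 : ℝ →L[ℝ] ℝ).smulRight (0:ℝ)‖ ≤ 0 := by
      intro x _; simp
    have := hconv.norm_image_sub_le_of_norm_hasFDerivWithin_le hF hb h0D ht
    have h0 : ‖E t - E 0‖ ≤ 0 := by simpa using this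
    have := norm_nonneg (E t - E 0)
    have : ‖E t - E 0‖ = 0 := le_antisymm h0 this
    rwa [norm_eq_zero, sub_eq_zero] at this
  -- value of the energy
  have hE0 : 0 < E 0 := by
    have : E 0 = (1 - ‖ξ 0‖ ^ 2) / (1 + ‖ξ 0‖ ^ 2) ^ 3 *
        ‖ξ' 0‖ ^ 2 := by
      simp [hE_def, Complex.sq_norm]
    rw [this]; exact hI₁
  -- formula for |ξ'|² on D
  have hform : ∀ t ∈ D, ‖ξ' t‖ ^ 2
      = E 0 * (1 + ‖ξ t‖ ^ 2) ^ 3 * (1 - ‖ξ t‖ ^ 2)⁻¹ := by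
    intro t ht
    have h := hconst t ht
    have hu1' := hu1 t ht
    have hne1 : (1 : ℝ) - Complex.normSq (ξ t) ≠ 0 := (sub_pos.2 hu1').ne'
    have hne2 : ((1 : ℝ) + Complex.normSq (ξ t)) ^ 3 ≠ 0 :=
      pow_ne_zero _ (by nlinarith [hu0 t])
    rw [Complex.sq_norm, Complex.sq_norm, ← h]
    simp only [hE_def]
    field_simp
    exact (mul_div_cancel_right₀ _ (by nlinarith [hu0 t])).symm
  -- eventually in D
  have hmemD : ∀ᶠ t in L, t ∈ D := by
    have h1 : Set.Ioi (0:EReal) ∩ Set.Iio T ∈ nhdsWithin T (Set.Iio T) :=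
      Filter.inter_mem (mem_nhdsWithin_of_mem_nhds (isOpen_Ioi.mem_nhds hT))
        self_mem_nhdsWithin
    have h2 : (fun t : ℝ => (t : EReal)) ⁻¹' (Set.Ioi 0 ∩ Set.Iio T) ∈ L :=
      Filter.preimage_mem_comap h1
    filter_upwards [h2] with t ht
    rw [hD]
    refine ⟨le_of_lt ?_, ht.2⟩
    have h0t : (0:EReal) < (t:EReal) := ht.1
    exact_mod_cast h0t
  -- limits
  have habs2 : Filter.Tendsto (fun t => ‖ξ t‖ ^ 2) L (nhds 1) := by
    have := hlim.pow 2
    simpa using this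
  have hden_pos : ∀ᶠ t in L, 0 < 1 - ‖ξ t‖ ^ 2 := by
    filter_upwards [hmemD] with t ht
    have h := hlt t ht
    have h0 := norm_nonneg (ξ t)
    nlinarith
  have h2 : Filter.Tendsto (fun t => 1 - ‖ξ t‖ ^ 2) L (nhdsWithin 0 (Set.Ioi 0)) := by
    rw [tendsto_nhdsWithin_iff]
    constructor
    · have := (tendsto_const_nhds (x := (1:ℝ)) (f := L)).sub habs2
      simpa using this
    · exact hden_pos
  have h3 : Filter.Tendsto (fun t => (1 - ‖ξ t‖ ^ 2)⁻¹) L Filter.atTop :=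
    h2.inv_tendsto_nhdsGT_zero
  have h4 : Filter.Tendsto (fun t => E 0 * (1 + ‖ξ t‖ ^ 2) ^ 3) L
      (nhds (E 0 * 8)) := by
    have := (tendsto_const_nhds (x := E 0) (f := L)).mul
      (((tendsto_const_nhds (x := (1:ℝ)) (f := L)).add habs2).pow 3)
    convert this using 2
    norm_num
  have h5 : Filter.Tendsto
      (fun t => E 0 * (1 + ‖ξ t‖ ^ 2) ^ 3 * (1 - ‖ξ t‖ ^ 2)⁻¹)
      L Filter.atTop :=
    h4.pos_mul_atTop (by linarith) h3
  have h6 : Filter.Tendsto (fun t => ‖ξ' t‖ ^ 2) L Filter.atTop := by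
    apply h5.congr'
    filter_upwards [hmemD] with t ht
    exact (hform t ht).symm
  have h7 := sqrt_tendsto_atTop'.comp h6
  have h8 : ∀ t : ℝ, Real.sqrt (‖ξ' t‖ ^ 2) = ‖ξ' t‖ :=
    fun t => Real.sqrt_sq (norm_nonneg _)
  exact h7.congr h8
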